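/- Let γ > 0, h ∈ (0,1), p > 0, q ≥ 0 with β := ((1+2h)/3) p − (1−h) q > 0, and κ₁, κ₂ > 0. Define L = −γu∂ᵤ − γv∂ᵥ − ((α_h u² − v²)/z^{2/3})∂ᵤ − ((α_h+1) uv/z^{2/3})∂ᵥ + (1−h) u z^{1/3} ∂_z + (κ₁/z^{2/3})∂ᵤ² + (κ₂/z^{2/3})∂ᵥ², where α_h = 1/3 + 2h/3, and φ(u,v,z) = (u²+v²)^{p/2} z^q. Then for every C > 0 there exists r* > 0 such that for all (u,v,z) with u²+v² ≥ r*², C u ≥ |v|, and 0 < z ≤ 1, one has L φ(u,v,z) ≤ −γ p r^p z^q − (β/(2√(1+C²))) r^{p+1} z^{q − 2/3}, where r = √(u²+v²). -/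

import Mathlib

open Real

/-- Partial derivative in the first variable. -/
noncomputable def pdu (f : ℝ → ℝ → ℝ → ℝ) : ℝ → ℝ → ℝ → ℝ :=
  fun u v z => deriv (fun u' => f u' v z) u

/-- Partial derivative in the second variable. -/
noncomputable def pdv (f : ℝ → ℝ → ℝ → ℝ) : ℝ → ℝ → ℝ → ℝ :=
  fun u v z => deriv (fun v' => f u v' z) v

/-- Partial derivative in the third variable. -/
noncomputable def pdz (f : ℝ → ℝ → ℝ → ℝ) : ℝ → ℝ → ℝ → ℝ :=
  fun u v z => deriv (fun z' => f u v z') z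

/-- The interior generator `L` of the reflected SDE in `(u,v,z)` coordinates. -/
noncomputable def Lop (γ h κ₁ κ₂ : ℝ) (f : ℝ → ℝ → ℝ → ℝ) (u v z : ℝ) : ℝ :=
  -γ * u * pdu f u v z - γ * v * pdv f u v z
    - (((1/3 + 2*h/3) * u ^ 2 - v ^ 2) / z ^ ((2:ℝ)/3)) * pdu f u v z
    - (((1/3 + 2*h/3) + 1) * u * v / z ^ ((2:ℝ)/3)) * pdv f u v z
    + (1 - h) * u * z ^ ((1:ℝ)/3) * pdz f u v z
    + (κ₁ / z ^ ((2:ℝ)/3)) * pdu (pdu f) u v z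
    + (κ₂ / z ^ ((2:ℝ)/3)) * pdv (pdv f) u v z

lemma hasD_u (p q v z u : ℝ) (hR : (0:ℝ) < u^2+v^2) :
    HasDerivAt (fun u' : ℝ => (u'^2+v^2)^(p/2) * z^q) (p*u*(u^2+v^2)^(p/2-1)*z^q) u := by
  have h1 : HasDerivAt (fun u' : ℝ => u'^2+v^2) (2*u) u := by
    simpa using (hasDerivAt_pow 2 u).add_const (v^2)
  have h2 := (h1.rpow_const (p := p/2) (Or.inl hR.ne')).mul_const (z^q)
  refine h2.congr_deriv ?_
  ring

lemma hasD_v (p q u z v : ℝ) (hR : (0:ℝ) < u^2+v^2) :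
    HasDerivAt (fun v' : ℝ => (u^2+v'^2)^(p/2) * z^q) (p*v*(u^2+v^2)^(p/2-1)*z^q) v := by
  have h1 : HasDerivAt (fun v' : ℝ => u^2+v'^2) (2*v) v := by
    simpa using ((hasDerivAt_pow 2 v).const_add (u^2))
  have h2 := (h1.rpow_const (p := p/2) (Or.inl hR.ne')).mul_const (z^q)
  refine h2.congr_deriv ?_
  ring

lemma hasD_u2 (p q v z u : ℝ) (hR : (0:ℝ) < u^2+v^2) :
    HasDerivAt (fun u' : ℝ => p*u'*(u'^2+v^2)^(p/2-1)*z^q)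
      ((p*(u^2+v^2)^(p/2-1) + p*(p-2)*u^2*(u^2+v^2)^(p/2-2))*z^q) u := by
  have h1 : HasDerivAt (fun u' : ℝ => u'^2+v^2) (2*u) u := by
    simpa using (hasDerivAt_pow 2 u).add_const (v^2)
  have h2 := h1.rpow_const (p := p/2-1) (Or.inl hR.ne')
  have h3 : HasDerivAt (fun u' : ℝ => p*u') p u := by
    simpa using (hasDerivAt_id u).const_mul p
  have h4 := (h3.mul h2).mul_const (z^q)
  refine h4.congr_deriv ?_
  have : p/2 - 1 - 1 = p/2 - 2 := by ring
  rw [this]; ring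

lemma hasD_v2 (p q u z v : ℝ) (hR : (0:ℝ) < u^2+v^2) :
    HasDerivAt (fun v' : ℝ => p*v'*(u^2+v'^2)^(p/2-1)*z^q)
      ((p*(u^2+v^2)^(p/2-1) + p*(p-2)*v^2*(u^2+v^2)^(p/2-2))*z^q) v := by
  have h1 : HasDerivAt (fun v' : ℝ => u^2+v'^2) (2*v) v := by
    simpa using ((hasDerivAt_pow 2 v).const_add (u^2))
  have h2 := h1.rpow_const (p := p/2-1) (Or.inl hR.ne')
  have h3 : HasDerivAt (fun v' : ℝ => p*v') p v := by
    simpa using (hasDerivAt_id v).const_mul p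
  have h4 := (h3.mul h2).mul_const (z^q)
  refine h4.congr_deriv ?_
  have : p/2 - 1 - 1 = p/2 - 2 := by ring
  rw [this]; ring

lemma hasD_z (p q u v z : ℝ) (hz : (0:ℝ) < z) :
    HasDerivAt (fun z' : ℝ => (u^2+v^2)^(p/2) * z'^q) ((u^2+v^2)^(p/2) * (q * z^(q-1))) z :=
  (Real.hasDerivAt_rpow_const (Or.inl hz.ne')).const_mul _


lemma Lop_eq (γ h p q κ₁ κ₂ u v z : ℝ) (hR : 0 < u^2+v^2) (hz : 0 < z) :
    Lop γ h κ₁ κ₂ (fun u v z => (u ^ 2 + v ^ 2) ^ (p/2) * z ^ q) u v z =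
      -γ*p*(u^2+v^2)^(p/2)*z^q
      - (((1+2*h)/3)*p - (1-h)*q)*u*(u^2+v^2)^(p/2)*z^(q-2/3)
      + p*(κ₁+κ₂)*(u^2+v^2)^(p/2-1)*z^(q-2/3)
      + p*(p-2)*(κ₁*u^2+κ₂*v^2)*(u^2+v^2)^(p/2-2)*z^(q-2/3) := by
  have huu : pdu (pdu (fun u v z => (u ^ 2 + v ^ 2) ^ (p/2) * z ^ q)) u v z =
      (p*(u^2+v^2)^(p/2-1) + p*(p-2)*u^2*(u^2+v^2)^(p/2-2))*z^q := by
    simp only [pdu]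
    have hmem : {u' : ℝ | 0 < u'^2 + v^2} ∈ nhds u := by
      have ho : IsOpen {u' : ℝ | 0 < u'^2 + v^2} :=
        isOpen_lt continuous_const (by continuity)
      exact ho.mem_nhds hR
    have hev : (fun u' => deriv (fun u'' : ℝ => (u''^2+v^2)^(p/2) * z^q) u')
        =ᶠ[nhds u] (fun u' => p*u'*(u'^2+v^2)^(p/2-1)*z^q) := by
      filter_upwards [hmem] with u' hR'
      exact (hasD_u p q v z u' hR').deriv
    rw [hev.deriv_eq]
    exact (hasD_u2 p q v z u hR).deriv
  have hvv : pdv (pdv (fun u v z => (u ^ 2 + v ^ 2) ^ (p/2) * z ^ q)) u v z =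
      (p*(u^2+v^2)^(p/2-1) + p*(p-2)*v^2*(u^2+v^2)^(p/2-2))*z^q := by
    simp only [pdv]
    have hmem : {v' : ℝ | 0 < u^2 + v'^2} ∈ nhds v := by
      have ho : IsOpen {v' : ℝ | 0 < u^2 + v'^2} :=
        isOpen_lt continuous_const (by continuity)
      exact ho.mem_nhds hR
    have hev : (fun v' => deriv (fun v'' : ℝ => (u^2+v''^2)^(p/2) * z^q) v')
        =ᶠ[nhds v] (fun v' => p*v'*(u^2+v'^2)^(p/2-1)*z^q) := by
      filter_upwards [hmem] with v' hR'
      exact (hasD_v p q u z v' hR').deriv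
    rw [hev.deriv_eq]
    exact (hasD_v2 p q u z v hR).deriv
  have hu : pdu (fun u v z => (u ^ 2 + v ^ 2) ^ (p/2) * z ^ q) u v z =
      p*u*(u^2+v^2)^(p/2-1)*z^q := (hasD_u p q v z u hR).deriv
  have hv : pdv (fun u v z => (u ^ 2 + v ^ 2) ^ (p/2) * z ^ q) u v z =
      p*v*(u^2+v^2)^(p/2-1)*z^q := (hasD_v p q u z v hR).deriv
  have hzd : pdz (fun u v z => (u ^ 2 + v ^ 2) ^ (p/2) * z ^ q) u v z =
      (u^2+v^2)^(p/2) * (q * z^(q-1)) := (hasD_z p q u v z hz).deriv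
  rw [Lop, hu, hv, hzd, huu, hvv]
  have A : z^q = z^(q-2/3) * z^((2:ℝ)/3) := by rw [← Real.rpow_add hz]; norm_num
  have C : z^(q-1) = z^(q-2/3) / z^((1:ℝ)/3) := by rw [← Real.rpow_sub hz]; ring_nf
  have D : z^((2:ℝ)/3) = z^((1:ℝ)/3) * z^((1:ℝ)/3) := by rw [← Real.rpow_add hz]; norm_num
  have h13 : z^((1:ℝ)/3) ≠ 0 := (Real.rpow_pos_of_pos hz _).ne'
  have hRR : (u^2+v^2)^(p/2-1) = (u^2+v^2)^(p/2-2) * (u^2+v^2) := by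
    rw [show p/2-1 = p/2-2+1 from by ring, Real.rpow_add_one hR.ne']
  have hRp : (u^2+v^2)^(p/2) = (u^2+v^2)^(p/2-2) * (u^2+v^2) * (u^2+v^2) := by
    conv_lhs => rw [show p/2 = p/2-2+1+1 from by ring, Real.rpow_add_one hR.ne', Real.rpow_add_one hR.ne']
  rw [A, C, D, hRR, hRp]
  field_simp
  ring

set_option maxHeartbeats 4000000 in
/-- Interior Lyapunov estimate in the initial outer region
`R₀ = {r ≥ r*, Cu ≥ |v|, 0 < z ≤ 1}` for `φ(u,v,z) = r^p z^q`. -/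
theorem Lyapunov_R0 (γ h p q β κ₁ κ₂ : ℝ)
    (hγ : 0 < γ) (hh : h ∈ Set.Ioo (0:ℝ) 1) (hp : 0 < p) (hq : 0 ≤ q)
    (hβdef : β = ((1 + 2*h)/3) * p - (1 - h) * q) (hβ : 0 < β)
    (hκ₁ : 0 < κ₁) (hκ₂ : 0 < κ₂) :
    ∀ C > (0:ℝ), ∃ rstar > (0:ℝ), ∀ u v z : ℝ,
      rstar ^ 2 ≤ u ^ 2 + v ^ 2 → |v| ≤ C * u → 0 < z → z ≤ 1 →
      Lop γ h κ₁ κ₂ (fun u v z => (u ^ 2 + v ^ 2) ^ (p/2) * z ^ q) u v z ≤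
        -γ * p * (Real.sqrt (u ^ 2 + v ^ 2)) ^ p * z ^ q
          - (β / (2 * Real.sqrt (1 + C ^ 2)))
            * (Real.sqrt (u ^ 2 + v ^ 2)) ^ (p + 1) * z ^ (q - 2/3) := by
  intro C hC
  set s := Real.sqrt (1 + C ^ 2) with hs_def
  have hs : 0 < s := Real.sqrt_pos.mpr (by positivity)
  have hs1 : 1 ≤ s := by
    nlinarith [Real.sq_sqrt (show (0:ℝ) ≤ 1 + C ^ 2 by positivity), Real.sqrt_nonneg (1 + C ^ 2), sq_nonneg C]
  set K := p * (1 + |p - 2|) * (κ₁ + κ₂) with hK_def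
  have hK : 0 < K := by
    have : 0 < 1 + |p - 2| := by positivity
    positivity
  refine ⟨max 1 (2 * s * K / β), lt_of_lt_of_le one_pos (le_max_left _ _), ?_⟩
  intro u v z hRge hvb hz hz1
  have hrst1 : (1:ℝ) ≤ max 1 (2 * s * K / β) := le_max_left _ _
  have hR : 0 < u ^ 2 + v ^ 2 :=
    lt_of_lt_of_le (pow_pos (lt_of_lt_of_le one_pos hrst1) 2) hRge
  have ht : 0 < z ^ (q - 2/3) := Real.rpow_pos_of_pos hz _
  have hRp : 0 < (u ^ 2 + v ^ 2) ^ (p/2) := Real.rpow_pos_of_pos hR _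
  have hR1 : 0 < (u ^ 2 + v ^ 2) ^ (p/2 - 1) := Real.rpow_pos_of_pos hR _
  have hR2 : 0 < (u ^ 2 + v ^ 2) ^ (p/2 - 2) := Real.rpow_pos_of_pos hR _
  have hrpos : 0 < Real.sqrt (u ^ 2 + v ^ 2) := Real.sqrt_pos.mpr hR
  have hRr : Real.sqrt (u ^ 2 + v ^ 2) * Real.sqrt (u ^ 2 + v ^ 2) = u ^ 2 + v ^ 2 :=
    Real.mul_self_sqrt hR.le
  have hrs : max 1 (2 * s * K / β) ≤ Real.sqrt (u ^ 2 + v ^ 2) := by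
    have h0 : 0 ≤ max 1 (2 * s * K / β) := by linarith
    have := Real.sqrt_le_sqrt hRge
    rwa [Real.sqrt_sq h0] at this
  have hr1 : 1 ≤ Real.sqrt (u ^ 2 + v ^ 2) := le_trans (le_max_left _ _) hrs
  have hr2 : 2 * s * K / β ≤ Real.sqrt (u ^ 2 + v ^ 2) := le_trans (le_max_right _ _) hrs
  -- u is nonnegative and comparable to r
  have hu0 : 0 ≤ u := by
    have h0 : 0 ≤ C * u := (abs_nonneg v).trans hvb
    exact le_of_mul_le_mul_left (by simpa using h0) hC
  have hv2 : v ^ 2 ≤ C ^ 2 * u ^ 2 := by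
    calc v ^ 2 = |v| ^ 2 := (sq_abs v).symm
      _ ≤ (C * u) ^ 2 := pow_le_pow_left₀ (abs_nonneg v) hvb 2
      _ = C ^ 2 * u ^ 2 := by ring
  have hru : Real.sqrt (u ^ 2 + v ^ 2) ≤ s * u := by
    have h1 : u ^ 2 + v ^ 2 ≤ (1 + C ^ 2) * u ^ 2 := by linarith [hv2]
    calc Real.sqrt (u ^ 2 + v ^ 2) ≤ Real.sqrt ((1 + C ^ 2) * u ^ 2) := Real.sqrt_le_sqrt h1
      _ = s * u := by
          rw [Real.sqrt_mul (by positivity), Real.sqrt_sq hu0]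
  -- rewrite via the generator identity
  rw [Lop_eq γ h p q κ₁ κ₂ u v z hR hz, ← hβdef]
  have E1 : (Real.sqrt (u ^ 2 + v ^ 2)) ^ p = (u ^ 2 + v ^ 2) ^ (p/2) := by
    rw [Real.sqrt_eq_rpow, ← Real.rpow_mul hR.le]
    congr 1; ring
  have E2 : (Real.sqrt (u ^ 2 + v ^ 2)) ^ (p + 1) =
      Real.sqrt (u ^ 2 + v ^ 2) * (u ^ 2 + v ^ 2) ^ (p/2) := by
    rw [Real.rpow_add hrpos, Real.rpow_one, E1, mul_comm]
  rw [E1, E2]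
  -- key drift estimate
  have h1 : (β / s) * Real.sqrt (u ^ 2 + v ^ 2) ≤ β * u := by
    rw [div_mul_eq_mul_div, div_le_iff₀ hs]
    linarith [mul_le_mul_of_nonneg_left hru hβ.le]
  have hstep1 : (β / s) * (Real.sqrt (u ^ 2 + v ^ 2) * (u ^ 2 + v ^ 2) ^ (p/2)) ≤
      β * (u * (u ^ 2 + v ^ 2) ^ (p/2)) := by
    have := mul_le_mul_of_nonneg_right h1 hRp.le
    linarith [this]
  -- noise estimate
  have hRR1 : (u ^ 2 + v ^ 2) ^ (p/2 - 1) = (u ^ 2 + v ^ 2) ^ (p/2 - 2) * (u ^ 2 + v ^ 2) := by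
    rw [show p/2 - 1 = p/2 - 2 + 1 from by ring, Real.rpow_add_one hR.ne']
  have hRR0 : (u ^ 2 + v ^ 2) ^ (p/2) = (u ^ 2 + v ^ 2) ^ (p/2 - 1) * (u ^ 2 + v ^ 2) := by
    conv_lhs => rw [show p/2 = p/2 - 1 + 1 from by ring, Real.rpow_add_one hR.ne']
  have hx : 0 ≤ κ₁ * u ^ 2 + κ₂ * v ^ 2 := by positivity
  have hxR : κ₁ * u ^ 2 + κ₂ * v ^ 2 ≤ (κ₁ + κ₂) * (u ^ 2 + v ^ 2) := by nlinarith
  have hnoise1 : p * (p - 2) * (κ₁ * u ^ 2 + κ₂ * v ^ 2) * (u ^ 2 + v ^ 2) ^ (p/2 - 2) ≤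
      p * |p - 2| * (κ₁ + κ₂) * (u ^ 2 + v ^ 2) ^ (p/2 - 1) := by
    rw [hRR1]
    rcases le_or_gt 0 (p - 2) with hp2 | hp2
    · rw [abs_of_nonneg hp2]
      have h5 := mul_le_mul_of_nonneg_left (mul_le_mul_of_nonneg_right hxR hR2.le)
        (mul_nonneg hp.le hp2)
      linarith [h5]
    · rw [abs_of_neg hp2]
      have hL : p * (p - 2) * (κ₁ * u ^ 2 + κ₂ * v ^ 2) * (u ^ 2 + v ^ 2) ^ (p/2 - 2) ≤ 0 := by
        have h6 : 0 ≤ p * (2 - p) * ((κ₁ * u ^ 2 + κ₂ * v ^ 2) * (u ^ 2 + v ^ 2) ^ (p/2 - 2)) :=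
          mul_nonneg (mul_nonneg hp.le (by linarith)) (mul_nonneg hx hR2.le)
        linarith [h6]
      have hRg : 0 ≤ p * -(p - 2) * (κ₁ + κ₂) * ((u ^ 2 + v ^ 2) ^ (p/2 - 2) * (u ^ 2 + v ^ 2)) :=
        mul_nonneg (mul_nonneg (mul_nonneg hp.le (by linarith)) (by positivity))
          (mul_nonneg hR2.le hR.le)
      linarith
  have hnoise : p * (κ₁ + κ₂) * (u ^ 2 + v ^ 2) ^ (p/2 - 1)
      + p * (p - 2) * (κ₁ * u ^ 2 + κ₂ * v ^ 2) * (u ^ 2 + v ^ 2) ^ (p/2 - 2) ≤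
      K * (u ^ 2 + v ^ 2) ^ (p/2 - 1) := by
    rw [hK_def]; linarith [hnoise1]
  -- smallness of noise relative to the drift
  have hKsmall : K ≤ (β / (2 * s)) * (Real.sqrt (u ^ 2 + v ^ 2) * (u ^ 2 + v ^ 2)) := by
    have hle1 : (1:ℝ) ≤ u ^ 2 + v ^ 2 := by
      rw [← hRr]
      linarith [mul_le_mul hr1 hr1 zero_le_one (le_trans zero_le_one hr1)]
    have h2' : 2 * s * K / β ≤ Real.sqrt (u ^ 2 + v ^ 2) * (u ^ 2 + v ^ 2) := by
      refine le_trans hr2 ?_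
      calc Real.sqrt (u ^ 2 + v ^ 2) = Real.sqrt (u ^ 2 + v ^ 2) * 1 := by ring
        _ ≤ Real.sqrt (u ^ 2 + v ^ 2) * (u ^ 2 + v ^ 2) :=
            mul_le_mul_of_nonneg_left hle1 hrpos.le
    have h3 := (div_le_iff₀ hβ).mp h2'
    rw [div_mul_eq_mul_div, le_div_iff₀ (by positivity : (0:ℝ) < 2 * s)]
    linarith [h3]
  have hstep2 : K * (u ^ 2 + v ^ 2) ^ (p/2 - 1) ≤
      (β / (2 * s)) * (Real.sqrt (u ^ 2 + v ^ 2) * (u ^ 2 + v ^ 2) ^ (p/2)) := by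
    have := mul_le_mul_of_nonneg_right hKsmall hR1.le
    calc K * (u ^ 2 + v ^ 2) ^ (p/2 - 1)
        ≤ (β / (2 * s)) * (Real.sqrt (u ^ 2 + v ^ 2) * (u ^ 2 + v ^ 2)) *
            (u ^ 2 + v ^ 2) ^ (p/2 - 1) := this
      _ = (β / (2 * s)) * (Real.sqrt (u ^ 2 + v ^ 2) * (u ^ 2 + v ^ 2) ^ (p/2)) := by
          rw [hRR0]; ring
  have hhalf : β / s = 2 * (β / (2 * s)) := by
    rw [show (2:ℝ) * s = s * 2 from mul_comm _ _, ← div_div]; ring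
  have key : -(β * u * (u ^ 2 + v ^ 2) ^ (p/2))
      + (p * (κ₁ + κ₂) * (u ^ 2 + v ^ 2) ^ (p/2 - 1)
        + p * (p - 2) * (κ₁ * u ^ 2 + κ₂ * v ^ 2) * (u ^ 2 + v ^ 2) ^ (p/2 - 2)) ≤
      -((β / (2 * s)) * (Real.sqrt (u ^ 2 + v ^ 2) * (u ^ 2 + v ^ 2) ^ (p/2))) := by
    have h7 := le_trans hnoise hstep2
    have hB : β / s * (Real.sqrt (u ^ 2 + v ^ 2) * (u ^ 2 + v ^ 2) ^ (p/2)) =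
        2 * ((β / (2 * s)) * (Real.sqrt (u ^ 2 + v ^ 2) * (u ^ 2 + v ^ 2) ^ (p/2))) := by
      rw [hhalf]; ring
    linarith only [hstep1, h7, hB]
  calc -γ*p*(u^2+v^2)^(p/2)*z^q - β*u*(u^2+v^2)^(p/2)*z^(q-2/3)
        + p*(κ₁+κ₂)*(u^2+v^2)^(p/2-1)*z^(q-2/3)
        + p*(p-2)*(κ₁*u^2+κ₂*v^2)*(u^2+v^2)^(p/2-2)*z^(q-2/3)
      = -γ*p*(u^2+v^2)^(p/2)*z^q
        + (-(β * u * (u ^ 2 + v ^ 2) ^ (p/2))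
          + (p * (κ₁ + κ₂) * (u ^ 2 + v ^ 2) ^ (p/2 - 1)
            + p * (p - 2) * (κ₁ * u ^ 2 + κ₂ * v ^ 2) * (u ^ 2 + v ^ 2) ^ (p/2 - 2)))
          * z^(q-2/3) := by ring
    _ ≤ -γ*p*(u^2+v^2)^(p/2)*z^q
        + (-((β / (2 * s)) * (Real.sqrt (u ^ 2 + v ^ 2) * (u ^ 2 + v ^ 2) ^ (p/2))))
          * z^(q-2/3) := by
          have := mul_le_mul_of_nonneg_right key ht.le
          linarith
    _ = -γ * p * (u ^ 2 + v ^ 2) ^ (p/2) * z ^ q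
          - (β / (2 * s)) * (Real.sqrt (u ^ 2 + v ^ 2) * (u ^ 2 + v ^ 2) ^ (p/2))
            * z ^ (q - 2/3) := by ring
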